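/- Let r₁, …, r_M be vectors in ℝⁿ (M ≥ 1), and let S = (1/M)·∑_{i=1}^{M} rᵢ rᵢᵀ ∈ M_n(ℝ) be the sample covariance matrix, regarded as an n × n real matrix (rᵢ rᵢᵀ denotes the outer product). Assume S is positive definite. Then for every positive definite matrix Σ ∈ M_n(ℝ), the inequality M·log(det Σ) + ∑_{i=1}^{M} rᵢᵀ Σ⁻¹ rᵢ ≥ M·log(det S) + M·n holds, with equality if and only if Σ = S. In particular, S is the unique minimizer of the Gaussian negative log-likelihood Σ ↦ M·log(det Σ) + ∑_{i=1}^{M} rᵢᵀ Σ⁻¹ rᵢ over positive definite matrices. -/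

import Mathlib

open Real Matrix

lemma key_trace_log (n : ℕ) {B : Matrix (Fin n) (Fin n) ℝ} (hB : B.PosDef) :
    ((n : ℝ) ≤ B.trace - Real.log B.det) ∧ (B.trace - Real.log B.det = n ↔ B = 1) := by
  classical
  set lam := hB.1.eigenvalues with hlam
  have hpos : ∀ i, 0 < lam i := hB.eigenvalues_pos
  have hdet : B.det = ∏ i, lam i := by
    simpa using hB.1.det_eq_prod_eigenvalues
  have htr : B.trace = ∑ i, lam i := by
    conv_lhs => rw [hB.1.spectral_theorem, Unitary.conjStarAlgAut_apply]
    rw [Matrix.trace_mul_cycle]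
    rw [show (star (hB.1.eigenvectorUnitary : Matrix (Fin n) (Fin n) ℝ)) *
        (hB.1.eigenvectorUnitary : Matrix (Fin n) (Fin n) ℝ) = 1 from
      Matrix.mem_unitaryGroup_iff'.mp hB.1.eigenvectorUnitary.2]
    simp [Matrix.trace_diagonal, hlam]
  have hlogdet : Real.log B.det = ∑ i, Real.log (lam i) := by
    rw [hdet, Real.log_prod fun i _ => (hpos i).ne']
  have hterm : ∀ i, (1:ℝ) ≤ lam i - Real.log (lam i) := by
    intro i
    have := Real.log_le_sub_one_of_pos (hpos i)
    linarith
  have hkey : B.trace - Real.log B.det = ∑ i, (lam i - Real.log (lam i)) := by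
    rw [htr, hlogdet, Finset.sum_sub_distrib]
  have hle : (n : ℝ) ≤ B.trace - Real.log B.det := by
    rw [hkey]
    calc (n:ℝ) = ∑ _i : Fin n, (1:ℝ) := by simp
    _ ≤ _ := Finset.sum_le_sum fun i _ => hterm i
  refine ⟨hle, ?_, ?_⟩
  · intro heq
    have hall : ∀ i ∈ Finset.univ, (1:ℝ) = lam i - Real.log (lam i) := by
      rw [← Finset.sum_eq_sum_iff_of_le fun i _ => hterm i]
      rw [← hkey, heq]; simp
    have hone : ∀ i, lam i = 1 := by
      intro i
      by_contra hne
      have := Real.log_lt_sub_one_of_pos (hpos i) hne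
      have := hall i (Finset.mem_univ i)
      linarith
    have hdiag : Matrix.diagonal (RCLike.ofReal ∘ lam) = (1 : Matrix (Fin n) (Fin n) ℝ) := by
      have h1 : (RCLike.ofReal ∘ lam : Fin n → ℝ) = fun _ => (1:ℝ) :=
        funext fun i => by simp [hone i]
      rw [h1]
      simp
    conv_lhs => rw [hB.1.spectral_theorem, Unitary.conjStarAlgAut_apply]
    rw [hdiag, mul_one]
    exact Matrix.mem_unitaryGroup_iff.mp hB.1.eigenvectorUnitary.2
  · intro h
    subst h
    simp

/-- the sample covariance uniquely minimizes the Gaussian negative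
log-likelihood.  Let `r₁, …, r_M ∈ ℝⁿ` and let `S = (1/M) ∑ᵢ rᵢrᵢᵀ` be positive
definite.  Then for every positive definite `Σ`,
`M·log(det Σ) + ∑ᵢ rᵢᵀ Σ⁻¹ rᵢ ≥ M·log(det S) + M·n`, with equality iff `Σ = S`. -/
theorem stmt9 (n M : ℕ) (hM : 1 ≤ M)
    (r : Fin M → (Fin n → ℝ))
    (S : Matrix (Fin n) (Fin n) ℝ)
    (hS : S = ((M : ℝ)⁻¹) • ∑ i, Matrix.of fun j l => r i j * r i l)
    (hSpd : S.PosDef) :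
    ∀ C : Matrix (Fin n) (Fin n) ℝ, C.PosDef →
      ((M : ℝ) * Real.log C.det + ∑ i, ∑ j, ∑ l, r i j * C⁻¹ j l * r i l ≥
          (M : ℝ) * Real.log S.det + (M : ℝ) * (n : ℝ)) ∧
      ((M : ℝ) * Real.log C.det + ∑ i, ∑ j, ∑ l, r i j * C⁻¹ j l * r i l =
          (M : ℝ) * Real.log S.det + (M : ℝ) * (n : ℝ) ↔ C = S) := by
  classical
  intro C hCpd
  have hMpos : (0 : ℝ) < (M : ℝ) := by exact_mod_cast hM
  -- the cross-term sum is M * trace (C⁻¹ * S)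
  have hMS : (M : ℝ) • S = ∑ i, Matrix.of fun j l => r i j * r i l := by
    rw [hS, smul_smul, mul_inv_cancel₀ hMpos.ne', one_smul]
  have hsum : ∑ i, ∑ j, ∑ l, r i j * C⁻¹ j l * r i l
      = (M : ℝ) * Matrix.trace (C⁻¹ * S) := by
    have h1 : ∀ i : Fin M, ∑ j, ∑ l, r i j * C⁻¹ j l * r i l
        = Matrix.trace (C⁻¹ * Matrix.of fun j l => r i j * r i l) := by
      intro i
      simp only [Matrix.trace, Matrix.diag, Matrix.mul_apply, Matrix.of_apply]
      exact Finset.sum_congr rfl fun j _ => Finset.sum_congr rfl fun l _ => by ring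
    simp_rw [h1]
    rw [← Matrix.trace_sum, ← Matrix.mul_sum, ← hMS, Matrix.mul_smul,
      Matrix.trace_smul, smul_eq_mul]
  -- square root of S
  open scoped MatrixOrder in
  set q := CFC.sqrt S with hq
  open scoped MatrixOrder in
  have hqherm : q.IsHermitian := (CFC.sqrt_nonneg S).posSemidef.1
  open scoped MatrixOrder in
  have hqq : q * q = S := CFC.sqrt_mul_sqrt_self S hSpd.posSemidef.nonneg
  have hdetq : q.det * q.det = S.det := by rw [← Matrix.det_mul, hqq]
  have hdetqne : q.det ≠ 0 := by
    intro h
    rw [h, zero_mul] at hdetq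
    exact hSpd.det_pos.ne' hdetq.symm
  have hqunit : IsUnit q := (Matrix.isUnit_iff_isUnit_det _).2 hdetqne.isUnit
  have hCdet : (0 : ℝ) < C.det := hCpd.det_pos
  have hCinv : (C⁻¹).PosDef := hCpd.inv
  have hqt : qᵀ = q := by
    rw [← Matrix.conjTranspose_eq_transpose_of_trivial]; exact hqherm.eq
  set B := q * C⁻¹ * q with hB
  have hBpd : B.PosDef := by
    refine Matrix.PosDef.of_dotProduct_mulVec_pos ?_ ?_
    · show Bᴴ = B
      rw [hB, Matrix.conjTranspose_mul, Matrix.conjTranspose_mul, hqherm.eq, hCinv.1.eq,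
        mul_assoc]
    · intro x hx
      have hqx : q *ᵥ x ≠ 0 := by
        intro h
        exact hx <| (Matrix.mulVec_injective_iff_isUnit.mpr hqunit) (by simp [h])
      have h2 := hCinv.dotProduct_mulVec_pos hqx
      have hkey : star x ⬝ᵥ ((q * C⁻¹ * q) *ᵥ x)
          = star (q *ᵥ x) ⬝ᵥ (C⁻¹ *ᵥ (q *ᵥ x)) := by
        rw [star_trivial, star_trivial, ← Matrix.mulVec_mulVec, ← Matrix.mulVec_mulVec,
          Matrix.dotProduct_mulVec x q, ← Matrix.mulVec_transpose, hqt]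
      show 0 < star x ⬝ᵥ ((q * C⁻¹ * q) *ᵥ x)
      rw [hkey]
      exact h2
  -- trace and det of B
  have htraceB : B.trace = Matrix.trace (C⁻¹ * S) := by
    rw [hB, Matrix.trace_mul_cycle, hqq, Matrix.trace_mul_comm]
  have hdetB : B.det = S.det * (C.det)⁻¹ := by
    rw [hB, Matrix.det_mul, Matrix.det_mul, Matrix.det_nonsing_inv, Ring.inverse_eq_inv]
    rw [← hdetq]; ring
  have hlogB : Real.log B.det = Real.log S.det - Real.log C.det := by
    rw [hdetB, Real.log_mul hSpd.det_pos.ne' (inv_ne_zero hCdet.ne'), Real.log_inv]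
    ring
  obtain ⟨hle, hiff⟩ := key_trace_log n hBpd
  rw [htraceB, hlogB] at hle hiff
  -- B = 1 ↔ C = S
  have hBone : B = 1 ↔ C = S := by
    constructor
    · intro h
      have hCiSi : C⁻¹ = S⁻¹ := by
        have hq1 : q * q⁻¹ = 1 := Matrix.mul_nonsing_inv _ hdetqne.isUnit
        have hq2 : q⁻¹ * q = 1 := Matrix.nonsing_inv_mul _ hdetqne.isUnit
        have h' : q * C⁻¹ * q = 1 := by rw [← hB]; exact h
        have : q⁻¹ * (q * C⁻¹ * q) * q⁻¹ = q⁻¹ * 1 * q⁻¹ := by rw [h']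
        calc C⁻¹ = q⁻¹ * (q * C⁻¹ * q) * q⁻¹ := by
              rw [← mul_assoc, ← mul_assoc, hq2, one_mul, mul_assoc, hq1, mul_one]
          _ = q⁻¹ * q⁻¹ := by rw [this, mul_one]
          _ = S⁻¹ := by rw [← hqq, Matrix.mul_inv_rev]
      calc C = C⁻¹⁻¹ := (Matrix.nonsing_inv_nonsing_inv _ hCdet.ne'.isUnit).symm
        _ = S⁻¹⁻¹ := by rw [hCiSi]
        _ = S := Matrix.nonsing_inv_nonsing_inv _ hSpd.det_pos.ne'.isUnit
    · intro h
      have hq1 : q * q⁻¹ = 1 := Matrix.mul_nonsing_inv _ hdetqne.isUnit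
      have hq2 : q⁻¹ * q = 1 := Matrix.nonsing_inv_mul _ hdetqne.isUnit
      rw [hB, h, ← hqq, Matrix.mul_inv_rev, ← mul_assoc, hq1, one_mul, hq2]
  rw [hBone] at hiff
  rw [hsum]
  constructor
  · have := mul_le_mul_of_nonneg_left hle hMpos.le
    nlinarith [this]
  · rw [← hiff]
    constructor
    · intro h
      have : Matrix.trace (C⁻¹ * S) - (Real.log S.det - Real.log C.det) = (n : ℝ) := by
        apply mul_left_cancel₀ hMpos.ne'
        linear_combination h
      exact this
    · intro h
      nlinarith [h]
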